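/- (Theorem 2) For the RCA defined by X(k,n+2) = cos θ [X(k+1,n+1) − X(k−1,n+1)] + X(k,n), the following three sets of initial states (α, β, γ) coincide: (a) the set Φ⊥ of states with β + γ = 0, or (|β| = |γ| > 0 and α = 0), or (|β| = |γ| > 0, α ≠ 0, and arg β + arg γ − 2 arg α ≡ π mod 2π); (b) the set Φ_s of states for which |X(k,n)| = |X(−k,n)| for all k, n; (c) the set Φ₀ of states for which ∑_k k·|X(k,n)|² = 0 for all n. -/

import Mathlib

noncomputable def rsol (c : ℝ) (f g : ℤ → ℝ) : ℕ → ℤ → ℝ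
  | 0 => f
  | 1 => g
  | (n+2) => fun k => c * (rsol c f g (n+1) (k+1) - rsol c f g (n+1) (k-1)) + rsol c f g n k

lemma rsol_neg (c : ℝ) (f g : ℤ → ℝ) : ∀ n k,
    rsol c (fun k => -f k) (fun k => -g k) n k = - rsol c f g n k := by
  intro n
  induction n using Nat.twoStepInduction with
  | zero => intro k; simp [rsol]
  | one => intro k; simp [rsol]
  | more n ih1 ih2 =>
    intro k
    show c * (_ - _) + _ = -(c * (_ - _) + _)
    simp only [ih1, ih2]; ring

lemma rsol_mirror (c : ℝ) (f g : ℤ → ℝ) : ∀ n k,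
    rsol c f g n (-k) = (-1:ℝ)^(n+1) * rsol c (fun k => -(f (-k))) (fun k => g (-k)) n k := by
  intro n
  induction n using Nat.twoStepInduction with
  | zero => intro k; simp [rsol]
  | one => intro k; simp [rsol]
  | more n ih1 ih2 =>
    intro k
    show c * (rsol c f g (n+1) (-k+1) - rsol c f g (n+1) (-k-1)) + rsol c f g n (-k)
      = (-1:ℝ)^(n+2+1) * (c * (_ - _) + _)
    have e1 : (-k+1 : ℤ) = -(k-1) := by ring
    have e2 : (-k-1 : ℤ) = -(k+1) := by ring
    rw [e1, e2]
    simp only [ih1, ih2]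
    ring

noncomputable def Af (c : ℝ) : ℕ → ℤ → ℝ := rsol c (fun k => if k = 0 then 1 else 0) (fun _ => 0)
noncomputable def Bf (c : ℝ) : ℕ → ℤ → ℝ := rsol c (fun _ => 0) (fun k => if k = -1 then 1 else 0)
noncomputable def Cf (c : ℝ) : ℕ → ℤ → ℝ := rsol c (fun _ => 0) (fun k => if k = 1 then 1 else 0)

lemma Af_mirror (c : ℝ) (n : ℕ) (k : ℤ) : Af c n (-k) = (-1:ℝ)^n * Af c n k := by
  have h := rsol_mirror c (fun k => if k = 0 then 1 else 0) (fun _ => 0) n k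
  have h2 : rsol c (fun k : ℤ => -(if -k = 0 then (1:ℝ) else 0)) (fun k : ℤ => (0:ℝ)) n k
      = - rsol c (fun k : ℤ => if -k = 0 then (1:ℝ) else 0) (fun _ => (0:ℝ)) n k := by
    have := rsol_neg c (fun k : ℤ => if -k = 0 then (1:ℝ) else 0) (fun _ => (0:ℝ)) n k
    simpa using this
  have h3 : (fun k : ℤ => if -k = 0 then (1:ℝ) else 0) = (fun k : ℤ => if k = 0 then (1:ℝ) else 0) := by
    funext k; simp [neg_eq_zero]
  rw [Af, h, h2, h3]
  show ((-1:ℝ))^(n+1) * -(Af c n k) = (-1:ℝ)^n * Af c n k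
  rw [pow_succ]
  ring

lemma Bf_mirror (c : ℝ) (n : ℕ) (k : ℤ) : Bf c n (-k) = (-1:ℝ)^(n+1) * Cf c n k := by
  have h := rsol_mirror c (fun _ => 0) (fun k => if k = -1 then (1:ℝ) else 0) n k
  have h3 : (fun k : ℤ => if -k = -1 then (1:ℝ) else 0) = (fun k : ℤ => if k = 1 then (1:ℝ) else 0) := by
    funext k; simp [neg_eq_iff_eq_neg]
  rw [Bf, h]
  simp only [neg_zero, h3]
  rfl

lemma Cf_mirror (c : ℝ) (n : ℕ) (k : ℤ) : Cf c n (-k) = (-1:ℝ)^(n+1) * Bf c n k := by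
  have h := rsol_mirror c (fun _ => 0) (fun k => if k = 1 then (1:ℝ) else 0) n k
  have h3 : (fun k : ℤ => if -k = 1 then (1:ℝ) else 0) = (fun k : ℤ => if k = -1 then (1:ℝ) else 0) := by
    funext k; simp [neg_eq_iff_eq_neg]
  rw [Cf, h]
  simp only [neg_zero, h3]
  rfl

lemma aux_normsq_diff (α β γ : ℂ) (a b c : ℝ) :
    ‖α*a + β*b + γ*c‖^2 - ‖-(α*a) + β*c + γ*b‖^2
      = (‖β‖^2 - ‖γ‖^2)*(b^2 - c^2) + 2*(((starRingEnd ℂ) α * (β+γ)).re)*(a*(b+c)) := by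
  have e : ∀ z : ℂ, ‖z‖^2 = z.re^2 + z.im^2 := by
    intro z
    rw [Complex.sq_norm, Complex.normSq_apply]; ring
  rw [e, e, e, e]
  simp [Complex.add_re, Complex.add_im, Complex.mul_re, Complex.mul_im, Complex.conj_re,
    Complex.conj_im, Complex.ofReal_re, Complex.ofReal_im]
  ring

lemma sub1 (u v : ℂ) (hn : Complex.normSq u = Complex.normSq v)
    (hre : (u*v).re < 0) (him : (u*v).im = 0) : (u+v).re = 0 := by
  set x := u.re; set y := u.im; set s := v.re; set t := v.im
  have hn' : x^2 + y^2 = s^2 + t^2 := by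
    simpa [Complex.normSq_apply, sq] using hn
  have hre' : x*s - y*t < 0 := by simpa [Complex.mul_re] using hre
  have him' : x*t + y*s = 0 := by simpa [Complex.mul_im, add_comm] using him
  have h1 : (x*s - y*t)^2 = (x^2+y^2)^2 := by nlinarith [sq_nonneg (x*t+y*s)]
  have h2 : x*s - y*t = -(x^2+y^2) := by nlinarith [sq_nonneg (x^2+y^2)]
  have h3 : (x+s)^2 + (y-t)^2 = 0 := by nlinarith
  have h4 : (x+s)^2 = 0 := by nlinarith [sq_nonneg (x+s), sq_nonneg (y-t)]
  have := pow_eq_zero_iff (n := 2) (by norm_num) |>.mp h4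
  simpa [Complex.add_re] using this

lemma sub2 (u v : ℂ) (hn : Complex.normSq u = Complex.normSq v)
    (hsum : (u+v).re = 0) (hne : u + v ≠ 0) (hu : u ≠ 0) :
    (u*v).re < 0 ∧ (u*v).im = 0 := by
  set x := u.re; set y := u.im; set s := v.re; set t := v.im
  have hn' : x^2 + y^2 = s^2 + t^2 := by
    simpa [Complex.normSq_apply, sq] using hn
  have hs : s = -x := by
    have : x + s = 0 := by simpa [Complex.add_re] using hsum
    linarith
  have ht2 : t^2 = y^2 := by rw [hs] at hn'; nlinarith
  have hyt : y + t ≠ 0 := by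
    intro h
    apply hne
    apply Complex.ext
    · simpa [Complex.add_re] using hsum
    · simpa [Complex.add_im] using h
  have ht : t = y := by
    have : (t - y) * (t + y) = 0 := by nlinarith
    rcases mul_eq_zero.mp this with h | h
    · linarith
    · exact absurd (by linarith) hyt
  have hu' : 0 < x^2 + y^2 := by
    rcases lt_or_eq_of_le (Complex.normSq_nonneg u) with h | h
    · simpa [Complex.normSq_apply, sq] using h
    · exact absurd (Complex.normSq_eq_zero.mp h.symm) hu
  constructor
  · show x*s - y*t < 0
    rw [hs, ht]; nlinarith
  · show x*t + y*s = 0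
    rw [hs, ht]; ring

lemma arg_lemma (α β γ : ℂ) (hα : α ≠ 0) (hβ : β ≠ 0) (hγ : γ ≠ 0) :
    (∃ m : ℤ, Complex.arg β + Complex.arg γ - 2 * Complex.arg α
        = Real.pi + 2 * Real.pi * m) ↔
      Complex.arg (β * γ * ((starRingEnd ℂ) α)^2) = Real.pi := by
  have hca : (starRingEnd ℂ) α ≠ 0 := by simpa using hα
  have hangle : (Complex.arg (β * γ * ((starRingEnd ℂ) α)^2) : Real.Angle)
      = ((Complex.arg β + Complex.arg γ - 2 * Complex.arg α : ℝ) : Real.Angle) := by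
    rw [show β * γ * ((starRingEnd ℂ) α)^2 = β * γ * (starRingEnd ℂ) α * (starRingEnd ℂ) α by ring]
    rw [Complex.arg_mul_coe_angle (mul_ne_zero (mul_ne_zero hβ hγ) hca) hca,
      Complex.arg_mul_coe_angle (mul_ne_zero hβ hγ) hca,
      Complex.arg_mul_coe_angle hβ hγ, Complex.arg_conj_coe_angle]
    rw [show Complex.arg β + Complex.arg γ - 2 * Complex.arg α
        = (Complex.arg β + Complex.arg γ) + (-(Complex.arg α) + -(Complex.arg α)) by ring]
    rw [Real.Angle.coe_add, Real.Angle.coe_add, Real.Angle.coe_add, Real.Angle.coe_neg]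
    abel
  constructor
  · rintro ⟨m, hm⟩
    have h1 : ((Complex.arg β + Complex.arg γ - 2 * Complex.arg α : ℝ) : Real.Angle)
        = ((Real.pi : ℝ) : Real.Angle) := by
      rw [Real.Angle.angle_eq_iff_two_pi_dvd_sub]
      exact ⟨m, by linarith⟩
    have h2 := hangle.trans h1
    rw [Real.Angle.angle_eq_iff_two_pi_dvd_sub] at h2
    obtain ⟨k, hk⟩ := h2
    have hle := Complex.arg_le_pi (β * γ * ((starRingEnd ℂ) α)^2)
    have hlt := Complex.neg_pi_lt_arg (β * γ * ((starRingEnd ℂ) α)^2)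
    have hpi := Real.pi_pos
    have hk0 : k = 0 := by
      have hub : (k:ℝ) ≤ 0 := by nlinarith
      have hlb : (-1:ℝ) < k := by nlinarith
      have hub' : k ≤ 0 := by exact_mod_cast hub
      have hlb' : (-1:ℤ) < k := by exact_mod_cast hlb
      omega
    rw [hk0] at hk
    push_cast at hk
    linarith
  · intro h
    have h1 : ((Real.pi : ℝ) : Real.Angle)
        = ((Complex.arg β + Complex.arg γ - 2 * Complex.arg α : ℝ) : Real.Angle) := by
      rw [← h, hangle]
    rw [Real.Angle.angle_eq_iff_two_pi_dvd_sub] at h1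
    obtain ⟨k, hk⟩ := h1
    exact ⟨-k, by push_cast; linarith⟩

lemma normSq_eq_of_norm_eq {β γ : ℂ} (h : ‖β‖ = ‖γ‖) : Complex.normSq β = Complex.normSq γ := by
  rw [Complex.normSq_eq_norm_sq, Complex.normSq_eq_norm_sq, h]

lemma P_iff_a (α β γ : ℂ) :
    (‖β‖ = ‖γ‖ ∧ ((starRingEnd ℂ) α * (β + γ)).re = 0) ↔
    (β + γ = 0 ∨
        (‖β‖ = ‖γ‖ ∧ 0 < ‖β‖ ∧ α = 0) ∨
        (‖β‖ = ‖γ‖ ∧ 0 < ‖β‖ ∧ α ≠ 0 ∧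
          ∃ m : ℤ, Complex.arg β + Complex.arg γ - 2 * Complex.arg α
            = Real.pi + 2 * Real.pi * m)) := by
  constructor
  · rintro ⟨hn, hre⟩
    by_cases hβγ : β + γ = 0
    · exact Or.inl hβγ
    have hβ : β ≠ 0 := by
      intro h
      apply hβγ
      have : ‖γ‖ = 0 := by rw [← hn, h, norm_zero]
      rw [h, norm_eq_zero.mp this, add_zero]
    have hβpos : 0 < ‖β‖ := norm_pos_iff.mpr hβ
    by_cases hα : α = 0
    · exact Or.inr (Or.inl ⟨hn, hβpos, hα⟩)
    refine Or.inr (Or.inr ⟨hn, hβpos, hα, ?_⟩)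
    have hγ : γ ≠ 0 := by
      intro h; rw [h, norm_zero] at hn; exact absurd hn (ne_of_gt hβpos)
    have hca : (starRingEnd ℂ) α ≠ 0 := by simpa using hα
    set u := (starRingEnd ℂ) α * β with hu_def
    set v := (starRingEnd ℂ) α * γ with hv_def
    have hnsq : Complex.normSq u = Complex.normSq v := by
      rw [hu_def, hv_def, Complex.normSq_mul, Complex.normSq_mul, normSq_eq_of_norm_eq hn]
    have hsum : (u + v).re = 0 := by
      rw [hu_def, hv_def, ← mul_add]; exact hre
    have hne : u + v ≠ 0 := by
      rw [hu_def, hv_def, ← mul_add]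
      exact mul_ne_zero hca hβγ
    have hune : u ≠ 0 := mul_ne_zero hca hβ
    obtain ⟨h1, h2⟩ := sub2 u v hnsq hsum hne hune
    rw [arg_lemma α β γ hα hβ hγ]
    rw [Complex.arg_eq_pi_iff]
    have huv : β * γ * ((starRingEnd ℂ) α)^2 = u * v := by rw [hu_def, hv_def]; ring
    rw [huv]
    exact ⟨h1, h2⟩
  · rintro (h | ⟨hn, _, hα⟩ | ⟨hn, hb, hα, hm⟩)
    · have hγ : γ = -β := by linear_combination h
      constructor
      · rw [hγ, norm_neg]
      · rw [h, mul_zero, Complex.zero_re]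
    · exact ⟨hn, by rw [hα, map_zero, zero_mul, Complex.zero_re]⟩
    · have hβ : β ≠ 0 := norm_pos_iff.mp hb
      have hγ : γ ≠ 0 := norm_pos_iff.mp (hn ▸ hb)
      refine ⟨hn, ?_⟩
      rw [arg_lemma α β γ hα hβ hγ, Complex.arg_eq_pi_iff] at hm
      set u := (starRingEnd ℂ) α * β with hu_def
      set v := (starRingEnd ℂ) α * γ with hv_def
      have hnsq : Complex.normSq u = Complex.normSq v := by
        rw [hu_def, hv_def, Complex.normSq_mul, Complex.normSq_mul, normSq_eq_of_norm_eq hn]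
      have huv : u * v = β * γ * ((starRingEnd ℂ) α)^2 := by rw [hu_def, hv_def]; ring
      have := sub1 u v hnsq (by rw [huv]; exact hm.1) (by rw [huv]; exact hm.2)
      rw [mul_add]
      exact this

theorem stmt11 (θ : ℝ) (hθ : θ ∈ Set.Ioo 0 (Real.pi / 2)) (α β γ : ℂ) (X : ℤ × ℕ → ℂ)
    (hrec : ∀ (k : ℤ) (n : ℕ),
      X (k, n + 2) = (Real.cos θ : ℂ) * (X (k + 1, n + 1) - X (k - 1, n + 1)) + X (k, n))
    (h00 : X (0, 0) = α) (hm1 : X (-1, 1) = β) (hp1 : X (1, 1) = γ)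
    (h0 : ∀ k : ℤ, k ≠ 0 → X (k, 0) = 0)
    (h1 : ∀ k : ℤ, k ≠ -1 → k ≠ 1 → X (k, 1) = 0) :
    ((β + γ = 0 ∨
        (‖β‖ = ‖γ‖ ∧ 0 < ‖β‖ ∧ α = 0) ∨
        (‖β‖ = ‖γ‖ ∧ 0 < ‖β‖ ∧ α ≠ 0 ∧
          ∃ m : ℤ, Complex.arg β + Complex.arg γ - 2 * Complex.arg α
            = Real.pi + 2 * Real.pi * m)) ↔
      (∀ (k : ℤ) (n : ℕ), ‖X (k, n)‖ = ‖X (-k, n)‖)) ∧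
    ((∀ (k : ℤ) (n : ℕ), ‖X (k, n)‖ = ‖X (-k, n)‖) ↔
      (∀ n : ℕ, ∑' k : ℤ, (k : ℝ) * ‖X (k, n)‖ ^ 2 = 0)) := by
  set c : ℝ := Real.cos θ with hc_def
  obtain ⟨hθ1, hθ2⟩ := hθ
  have hpi := Real.pi_pos
  have hc1 : 0 < c := Real.cos_pos_of_mem_Ioo ⟨by linarith, hθ2⟩
  have hc2 : c < 1 := by
    rw [hc_def, show (1:ℝ) = Real.cos 0 by simp]
    apply Real.cos_lt_cos_of_nonneg_of_le_pi le_rfl (by linarith) hθ1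
  -- finite support
  have hsupp : ∀ (n : ℕ) (k : ℤ), n < k.natAbs → X (k, n) = 0 := by
    intro n
    induction n using Nat.twoStepInduction with
    | zero => intro k hk; exact h0 k (by omega)
    | one => intro k hk; exact h1 k (by omega) (by omega)
    | more n ih1 ih2 =>
      intro k hk
      rw [hrec k n, ih2 (k+1) (by omega), ih2 (k-1) (by omega), ih1 k (by omega)]
      ring
  -- decomposition
  have hdec : ∀ (n : ℕ) (k : ℤ),
      X (k, n) = α * (Af c n k) + β * (Bf c n k) + γ * (Cf c n k) := by
    intro n
    induction n using Nat.twoStepInduction with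
    | zero =>
      intro k
      show X (k, 0) = α * ((if k = 0 then (1:ℝ) else 0) : ℝ) + β * ((0:ℝ):ℂ) + γ * ((0:ℝ):ℂ)
      by_cases hk : k = 0
      · subst hk; simpa using h00
      · simp [h0 k hk, hk]
    | one =>
      intro k
      show X (k, 1) = α * ((0:ℝ):ℂ) + β * ((if k = -1 then (1:ℝ) else 0) : ℝ)
          + γ * ((if k = 1 then (1:ℝ) else 0) : ℝ)
      by_cases hk1 : k = -1
      · subst hk1; simp [hm1]
      · by_cases hk2 : k = 1
        · subst hk2; simpa using hp1
        · simp [h1 k hk1 hk2, hk1, hk2]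
    | more n ih1 ih2 =>
      intro k
      rw [hrec k n, ih2 (k+1), ih2 (k-1), ih1 k]
      show _ = α * ((c * (Af c (n+1) (k+1) - Af c (n+1) (k-1)) + Af c n k : ℝ) : ℂ)
          + β * ((c * (Bf c (n+1) (k+1) - Bf c (n+1) (k-1)) + Bf c n k : ℝ) : ℂ)
          + γ * ((c * (Cf c (n+1) (k+1) - Cf c (n+1) (k-1)) + Cf c n k : ℝ) : ℂ)
      push_cast
      ring
  -- mirror identity
  have hXmirror : ∀ (n : ℕ) (k : ℤ), X (-k, n)
      = ((-1:ℂ))^(n+1) * (-(α * (Af c n k)) + β * (Cf c n k) + γ * (Bf c n k)) := by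
    intro n k
    have h := hdec n (-k)
    rw [Af_mirror, Bf_mirror, Cf_mirror] at h
    rw [h]
    push_cast
    rw [pow_succ]
    ring
  have hnormm : ∀ (n : ℕ) (k : ℤ), ‖X (-k, n)‖
      = ‖-(α * (Af c n k : ℝ)) + β * (Cf c n k : ℝ) + γ * (Bf c n k : ℝ)‖ := by
    intro n k
    rw [hXmirror n k, norm_mul, norm_pow, norm_neg, norm_one, one_pow, one_mul]
  have hkey : ∀ (n : ℕ) (k : ℤ), ‖X (k, n)‖^2 - ‖X (-k, n)‖^2
      = (‖β‖^2 - ‖γ‖^2)*((Bf c n k)^2 - (Cf c n k)^2)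
        + 2*(((starRingEnd ℂ) α * (β+γ)).re)*((Af c n k)*((Bf c n k)+(Cf c n k))) := by
    intro n k
    rw [hdec n k, hnormm n k]
    exact aux_normsq_diff α β γ _ _ _
  -- P implies symmetry
  have hPb : (‖β‖ = ‖γ‖ ∧ ((starRingEnd ℂ) α * (β + γ)).re = 0) →
      ∀ (k : ℤ) (n : ℕ), ‖X (k, n)‖ = ‖X (-k, n)‖ := by
    rintro ⟨hn, hre⟩ k n
    have h := hkey n k
    rw [hn, hre, sub_self, zero_mul, mul_zero, zero_mul, add_zero] at h
    have h2 : ‖X (k, n)‖^2 = ‖X (-k, n)‖^2 := by linarith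
    have n1 := norm_nonneg (X (k, n))
    have n2 := norm_nonneg (X (-k, n))
    nlinarith
  -- symmetry implies zero momenta
  have hbc : (∀ (k : ℤ) (n : ℕ), ‖X (k, n)‖ = ‖X (-k, n)‖) →
      ∀ n : ℕ, ∑' k : ℤ, (k : ℝ) * ‖X (k, n)‖ ^ 2 = 0 := by
    intro hb n
    have h1 : ∑' k : ℤ, ((-k : ℤ) : ℝ) * ‖X (-k, n)‖ ^ 2
        = ∑' k : ℤ, (k : ℝ) * ‖X (k, n)‖ ^ 2 :=
      (Equiv.neg ℤ).tsum_eq (fun k : ℤ => (k : ℝ) * ‖X (k, n)‖ ^ 2)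
    have h2 : ∑' k : ℤ, ((-k : ℤ) : ℝ) * ‖X (-k, n)‖ ^ 2
        = -∑' k : ℤ, (k : ℝ) * ‖X (k, n)‖ ^ 2 := by
      rw [show (fun k : ℤ => ((-k : ℤ) : ℝ) * ‖X (-k, n)‖ ^ 2)
          = fun k : ℤ => -((k : ℝ) * ‖X (k, n)‖ ^ 2) by
        funext k; rw [← hb k n]; push_cast; ring]
      exact tsum_neg
    rw [h2] at h1
    linarith
  -- zero momenta implies P
  have hcP : (∀ n : ℕ, ∑' k : ℤ, (k : ℝ) * ‖X (k, n)‖ ^ 2 = 0) →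
      (‖β‖ = ‖γ‖ ∧ ((starRingEnd ℂ) α * (β + γ)).re = 0) := by
    intro hC
    have h00' : X 0 = α := h00
    have hp1' : X 1 = γ := hp1
    have hn1 : ‖β‖ = ‖γ‖ := by
      have h := hC 1
      rw [tsum_eq_sum (s := ({-1, 1} : Finset ℤ))
        (by
          intro k hk
          simp only [Finset.mem_insert, Finset.mem_singleton] at hk
          push_neg at hk
          rw [h1 k hk.1 hk.2]
          simp)] at h
      rw [Finset.sum_insert (by norm_num), Finset.sum_singleton] at h
      rw [hm1, hp1] at h
      push_cast at h
      have n1 := norm_nonneg β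
      have n2 := norm_nonneg γ
      nlinarith
    refine ⟨hn1, ?_⟩
    -- values at time 2
    have h02 : X (0, 2) = (c:ℂ) * (γ - β) + α := by
      have h := hrec 0 0
      norm_num [hp1, hp1', hm1, h00, h00'] at h
      linear_combination h
    have h22 : X (2, 2) = -(c:ℂ) * γ := by
      have h := hrec 2 0
      norm_num [hp1, hp1', h1 3 (by norm_num) (by norm_num), h0 2 (by norm_num)] at h
      linear_combination h
    have hm22 : X (-2, 2) = (c:ℂ) * β := by
      have h := hrec (-2) 0
      norm_num [hm1, h1 (-3) (by norm_num) (by norm_num), h0 (-2) (by norm_num)] at h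
      linear_combination h
    have h12 : X (1, 2) = 0 := by
      have h := hrec 1 0
      norm_num [h1 2 (by norm_num) (by norm_num), h1 0 (by norm_num) (by norm_num),
        h0 1 (by norm_num)] at h
      linear_combination h
    have hm12 : X (-1, 2) = 0 := by
      have h := hrec (-1) 0
      norm_num [h1 0 (by norm_num) (by norm_num), h1 (-2) (by norm_num) (by norm_num),
        h0 (-1) (by norm_num)] at h
      linear_combination h
    -- values at time 3
    have h33 : X (3, 3) = (c:ℂ)^2 * γ := by
      have h := hrec 3 1
      norm_num [hsupp 2 4 (by decide), h22, h1 3 (by norm_num) (by norm_num)] at h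
      linear_combination h
    have h13 : X (1, 3) = (1 - 2*(c:ℂ)^2) * γ + (c:ℂ)^2 * β - (c:ℂ) * α := by
      have h := hrec 1 1
      norm_num [h22, h02, hp1, hp1'] at h
      linear_combination h
    have hm13 : X (-1, 3) = (1 - 2*(c:ℂ)^2) * β + (c:ℂ)^2 * γ + (c:ℂ) * α := by
      have h := hrec (-1) 1
      norm_num [h02, hm22, hm1] at h
      linear_combination h
    have hm33 : X (-3, 3) = (c:ℂ)^2 * β := by
      have h := hrec (-3) 1
      norm_num [hsupp 2 (-4) (by decide), hm22, h1 (-3) (by norm_num) (by norm_num)] at h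
      linear_combination h
    have h03 : X (0, 3) = 0 := by
      have h := hrec 0 1
      norm_num [h12, hm12, h1 0 (by norm_num) (by norm_num)] at h
      linear_combination h
    have h23 : X (2, 3) = 0 := by
      have h := hrec 2 1
      norm_num [hsupp 2 3 (by decide), h12, h1 2 (by norm_num) (by norm_num)] at h
      linear_combination h
    have hm23 : X (-2, 3) = 0 := by
      have h := hrec (-2) 1
      norm_num [hsupp 2 (-3) (by decide), hm12, h1 (-2) (by norm_num) (by norm_num)] at h
      linear_combination h
    -- the momentum at time 3
    have h := hC 3
    rw [tsum_eq_sum (s := ({-3, -1, 1, 3} : Finset ℤ))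
      (by
        intro k hk
        simp only [Finset.mem_insert, Finset.mem_singleton] at hk
        push_neg at hk
        by_cases hbig : 3 < k.natAbs
        · rw [hsupp 3 k hbig]; simp
        · have hb1 : -3 ≤ k := by omega
          have hb2 : k ≤ 3 := by omega
          interval_cases k
          · exact absurd rfl hk.1
          · rw [hm23]; simp
          · exact absurd rfl hk.2.1
          · rw [h03]; simp
          · exact absurd rfl hk.2.2.1
          · rw [h23]; simp
          · exact absurd rfl hk.2.2.2)] at h
    rw [Finset.sum_insert (by norm_num), Finset.sum_insert (by norm_num),
      Finset.sum_insert (by norm_num), Finset.sum_singleton] at h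
    rw [hm33, hm13, h13, h33] at h
    push_cast at h
    -- expand norms into components
    have e : ∀ z : ℂ, ‖z‖^2 = z.re^2 + z.im^2 := by
      intro z
      rw [Complex.sq_norm, Complex.normSq_apply]; ring
    rw [e, e, e, e] at h
    have hb2 : β.re^2 + β.im^2 = γ.re^2 + γ.im^2 := by
      have := normSq_eq_of_norm_eq hn1
      simpa [Complex.normSq_apply, sq] using this
    simp only [Complex.add_re, Complex.add_im, Complex.sub_re, Complex.sub_im, Complex.mul_re,
      Complex.mul_im, Complex.ofReal_re, Complex.ofReal_im, Complex.neg_re, Complex.neg_im,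
      Complex.one_re, Complex.one_im, Complex.re_ofNat, Complex.im_ofNat,
      ← Complex.ofReal_pow] at h
    have hT : ((starRingEnd ℂ) α * (β + γ)).re
        = α.re*(β.re+γ.re) + α.im*(β.im+γ.im) := by
      simp only [Complex.mul_re, Complex.add_re, Complex.add_im, Complex.conj_re,
        Complex.conj_im]
      ring
    have h5 : c*(1-c^2)*(((starRingEnd ℂ) α * (β + γ)).re) = 0 := by
      rw [hT]
      linear_combination (-(1:ℝ)/2) * h - ((6*c^4 - 4*c^2 + 1)/2) * hb2
    have hpos : 0 < c*(1-c^2) := by nlinarith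
    rcases mul_eq_zero.mp h5 with h6 | h6
    · exact absurd h6 (ne_of_gt hpos)
    · exact h6
  constructor
  · constructor
    · intro ha
      exact hPb ((P_iff_a α β γ).mpr ha)
    · intro hb
      exact (P_iff_a α β γ).mp (hcP (hbc hb))
  · constructor
    · exact hbc
    · intro hc k n
      exact hPb (hcP hc) k n
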